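/- Let E be a quasi-safe L-expression with variables among x_1, …, x_m, let 𝔈 be the set of all safe subexpressions occurring in E, and let f^𝔈 and the variables (p_{E'})_{E'∈𝔈} be such that E' and KF_{f^𝔈}^{p_{E'}} denote the same subset in every frame under every assignment, for all E' ∈ 𝔈. Define the modal translation E^T by: E'^T = p_{E'} for safe E'; (E_1 ∩ E_2)^T = E_1^T ∧ E_2^T; (E_1 ∪ E_2)^T = E_1^T ∨ E_2^T; (R_λ^{-1}E_1)^T = ◇_λ E_1^T; (R_λ^□E_1)^T = □_λ E_1^T. Then for every fixed l, the first-order formula (x_l ∈ E)^# is definable by the sequence of modal formulas φ_1, …, φ_m where φ_i = ⋁_{φ ∈ f^𝔈(x_i)} ¬φ for i ≠ l and φ_l = (⋁_{φ ∈ f^𝔈(x_l)} ¬φ) ∨ E^T; that is, for every frame F and points w_1, …, w_m: F ⊨ (x_l ∈ E)^#[w_1,…,w_m] iff for every valuation θ there exists i with F, w_i, θ ⊨ φ_i. -/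

import Mathlib

set_option autoImplicit true

universe u v w

/-- Modal formulas over modality indices `Λ` and propositional variables `V`. -/
inductive MF (Λ : Type u) (V : Type v) : Type (max u v)
  | var : V → MF Λ V
  | top : MF Λ V
  | bot : MF Λ V
  | and : MF Λ V → MF Λ V → MF Λ V
  | or  : MF Λ V → MF Λ V → MF Λ V
  | neg : MF Λ V → MF Λ V
  | imp : MF Λ V → MF Λ V → MF Λ V
  | dia : Λ → MF Λ V → MF Λ V
  | box : Λ → MF Λ V → MF Λ V

namespace MF
variable {Λ : Type u} {V : Type v}

/-- The set of propositional variables occurring in a modal formula. -/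
def vars : MF Λ V → Set V
  | var p => {p}
  | top => ∅
  | bot => ∅
  | and a b => vars a ∪ vars b
  | or a b => vars a ∪ vars b
  | neg a => vars a
  | imp a b => vars a ∪ vars b
  | dia _ a => vars a
  | box _ a => vars a

end MF

/-- Positive modal formulas: built without `¬` and `→`. -/
inductive Positive {Λ : Type u} {V : Type v} : MF Λ V → Prop
  | var (p : V) : Positive (.var p)
  | top : Positive .top
  | bot : Positive .bot
  | and {a b} : Positive a → Positive b → Positive (.and a b)
  | or {a b} : Positive a → Positive b → Positive (.or a b)
  | dia (l) {a} : Positive a → Positive (.dia l a)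
  | box (l) {a} : Positive a → Positive (.box l a)

/-- A Kripke frame with accessibility relations indexed by `Λ`. -/
structure Frame (Λ : Type u) where
  W : Type w
  R : Λ → W → W → Prop

/-- Kripke satisfaction `F, x, θ ⊨ φ`. -/
def sat {Λ : Type u} {V : Type v} (F : Frame Λ) (θ : V → Set F.W) : F.W → MF Λ V → Prop
  | x, .var p => x ∈ θ p
  | _, .top => True
  | _, .bot => False
  | x, .and a b => sat F θ x a ∧ sat F θ x b
  | x, .or a b => sat F θ x a ∨ sat F θ x b
  | x, .neg a => ¬ sat F θ x a
  | x, .imp a b => sat F θ x a → sat F θ x b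
  | x, .dia l a => ∃ y, F.R l x y ∧ sat F θ y a
  | x, .box l a => ∀ y, F.R l x y → sat F θ y a

/-- `BoxF φ p S`: `φ` is a box-formula with head `p`, in which the set of variables
occurring not as the head is `S`. -/
inductive BoxF {Λ : Type u} {V : Type v} : MF Λ V → V → Set V → Prop
  | var (p : V) : BoxF (.var p) p ∅
  | imp {POS ψ p S} : Positive POS → BoxF ψ p S → BoxF (.imp POS ψ) p (MF.vars POS ∪ S)
  | box (l) {ψ p S} : BoxF ψ p S → BoxF (.box l ψ) p S

/-- `RegBF r φ p`: relative to the rank assignment `r`, `φ` is a regular box-formula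
with head `p` (of rank `r p`): all variables of the positive antecedents have rank `< r p`. -/
inductive RegBF {Λ : Type u} {V : Type v} (r : V → ℕ) : MF Λ V → V → Prop
  | var (p : V) : RegBF r (.var p) p
  | imp {POS ψ p} : Positive POS → (∀ q ∈ MF.vars POS, r q < r p) →
      RegBF r ψ p → RegBF r (.imp POS ψ) p
  | box (l) {ψ p} : RegBF r ψ p → RegBF r (.box l ψ) p

/-- The edge relation of the dependency graph of a set `A` of box-formulas:
`p → q` iff `p` occurs (not as the head) in some member of `A` with head `q`. -/
def depEdge {Λ : Type u} {V : Type v} (A : Set (MF Λ V)) (p q : V) : Prop :=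
  ∃ φ ∈ A, ∃ S, BoxF φ q S ∧ p ∈ S

/-- A set of box-formulas is regular if its dependency graph has no oriented cycle. -/
def RegularSet {Λ : Type u} {V : Type v} (A : Set (MF Λ V)) : Prop :=
  ∀ p : V, ¬ Relation.TransGen (depEdge A) p p

/-- `R_λ^{-1}(A) = {u : ∃ v, u R_λ v ∧ v ∈ A}`. -/
def Rinv {Λ : Type u} (F : Frame Λ) (l : Λ) (A : Set F.W) : Set F.W :=
  {u | ∃ v, F.R l u v ∧ v ∈ A}

/-- `R_λ^□(A) = {u : ∀ v, u R_λ v → v ∈ A}`. -/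
def RboxOp {Λ : Type u} (F : Frame Λ) (l : Λ) (A : Set F.W) : Set F.W :=
  {u | ∀ v, F.R l u v → v ∈ A}

/-- `R_λ(A) = {u : ∃ v, v R_λ u ∧ v ∈ A}`. -/
def Rfwd {Λ : Type u} (F : Frame Λ) (l : Λ) (A : Set F.W) : Set F.W :=
  {u | ∃ v, F.R l v u ∧ v ∈ A}

/-- The interpretation of the expression `KP^{POS}` in a frame `F`, the set variables
`P^l_i` being interpreted by `P`.  (Junk value `∅` on non-positive constructors.) -/
def KPsem {Λ : Type u} (F : Frame Λ) (P : ℕ × ℕ → Set F.W) : MF Λ (ℕ × ℕ) → Set F.W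
  | .var q => P q
  | .top => Set.univ
  | .bot => ∅
  | .and a b => KPsem F P a ∩ KPsem F P b
  | .or a b => KPsem F P a ∪ KPsem F P b
  | .dia l a => Rinv F l (KPsem F P a)
  | .box l a => RboxOp F l (KPsem F P a)
  | .neg _ => ∅
  | .imp _ _ => ∅

/-- The interpretation of the expression `KV^φ` in a frame `F`: the set variables `P^l_i`
are interpreted by `P` and the extra variable `#` by the second argument.
(Junk value `∅` on constructors that do not occur in regular box-formulas.) -/
def KVsem {Λ : Type u} (F : Frame Λ) (P : ℕ × ℕ → Set F.W) : MF Λ (ℕ × ℕ) → Set F.W → Set F.W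
  | .var _, X => X
  | .imp POS ψ, X => KVsem F P ψ (X ∩ KPsem F P POS)
  | .box l ψ, X => KVsem F P ψ (Rfwd F l X)
  | _, _ => ∅

/-- The semantic minimal valuation: given points `g j` and sets `f j` of regular
box-formulas to be verified at `g j`, `thetaMinSem F g f k i` is the minimal value of the
variable `p^k_i`; it is defined by recursion on the rank `k` as the union, over all `j` and
all `φ ∈ f j` with head `p^k_i`, of `KV^φ(g j)` computed with the minimal values of the
variables of lower rank. -/
noncomputable def thetaMinSem {Λ : Type u} (F : Frame Λ) {ι : Type w} (g : ι → F.W)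
    (f : ι → Set (MF Λ (ℕ × ℕ))) : ℕ → ℕ → Set F.W :=
  fun k => Nat.strongRecOn (motive := fun _ => ℕ → Set F.W) k fun k ih i =>
    ⋃ (j : ι), ⋃ φ ∈ f j, ⋃ (_ : RegBF Prod.fst φ (k, i)),
      KVsem F (fun q => if h : q.1 < k then ih q.1 h q.2 else ∅) φ {g j}

/-- `L`-expressions: terms of the language `L` with individual variables `x_i` (`i : ℕ`),
constants `⊤, ⊥`, unary `R_λ^{-1}`, `R_λ^□`, `R_λ` and binary `∩`, `∪`. -/
inductive LExp (Λ : Type u) : Type u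
  | var : ℕ → LExp Λ
  | top : LExp Λ
  | bot : LExp Λ
  | inter : LExp Λ → LExp Λ → LExp Λ
  | union : LExp Λ → LExp Λ → LExp Λ
  | rinv : Λ → LExp Λ → LExp Λ
  | rbox : Λ → LExp Λ → LExp Λ
  | rfw : Λ → LExp Λ → LExp Λ

namespace LExp
variable {Λ : Type u}

/-- Denotation of an `L`-expression in a frame `F`, the variable `x_i` denoting the
singleton of the point `g i`. -/
def den (F : Frame Λ) (g : ℕ → F.W) : LExp Λ → Set F.W
  | var i => {g i}
  | top => Set.univ
  | bot => ∅
  | inter a b => den F g a ∩ den F g b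
  | union a b => den F g a ∪ den F g b
  | rinv l a => Rinv F l (den F g a)
  | rbox l a => RboxOp F l (den F g a)
  | rfw l a => Rfwd F l (den F g a)

/-- The set of (indices of) individual variables occurring in an `L`-expression. -/
def evars : LExp Λ → Set ℕ
  | var i => {i}
  | top => ∅
  | bot => ∅
  | inter a b => evars a ∪ evars b
  | union a b => evars a ∪ evars b
  | rinv _ a => evars a
  | rbox _ a => evars a
  | rfw _ a => evars a

end LExp

/-- The subexpression relation on `L`-expressions. -/
inductive Subexp {Λ : Type u} : LExp Λ → LExp Λ → Prop
  | refl (e : LExp Λ) : Subexp e e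
  | interL {e a b} : Subexp e a → Subexp e (.inter a b)
  | interR {e a b} : Subexp e b → Subexp e (.inter a b)
  | unionL {e a b} : Subexp e a → Subexp e (.union a b)
  | unionR {e a b} : Subexp e b → Subexp e (.union a b)
  | rinv (l) {e a} : Subexp e a → Subexp e (.rinv l a)
  | rbox (l) {e a} : Subexp e a → Subexp e (.rbox l a)
  | rfw (l) {e a} : Subexp e a → Subexp e (.rfw l a)

/-- `SafeFor e`: `e` is "safe for" the ambient expression, i.e. `e` is a variable, or
`R_λ(e')` with `e'` safe for it, or an intersection one of whose components is safe for it. -/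
inductive SafeFor {Λ : Type u} : LExp Λ → Prop
  | var (i : ℕ) : SafeFor (.var i)
  | rfw (l) {a} : SafeFor a → SafeFor (.rfw l a)
  | interL {a b} : SafeFor a → SafeFor (.inter a b)
  | interR {a b} : SafeFor b → SafeFor (.inter a b)

/-- An `L`-expression is safe if it is safe for itself and the argument of every
subexpression of the form `R_λ(ψ)` is safe for it. -/
def Safe {Λ : Type u} (e : LExp Λ) : Prop :=
  SafeFor e ∧ ∀ l a, Subexp (.rfw l a) e → SafeFor a

mutual
  /-- The class `K`: the least class of `L`-expressions containing the variables and closed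
  under `S ↦ R_λ(S)` and `S ↦ S ∩ E` for `E` a positive combination of members of `K`. -/
  inductive InK {Λ : Type u} : LExp Λ → Prop
    | var (i : ℕ) : InK (.var i)
    | rfw (l : Λ) {S : LExp Λ} : InK S → InK (.rfw l S)
    | inter {S E : LExp Λ} : InK S → PosOfK E → InK (.inter S E)
  /-- Positive combinations of members of `K`: built from members of `K` using only
  `∩`, `∪`, `R_λ^{-1}`, `R_λ^□`, `⊤`, `⊥`. -/
  inductive PosOfK {Λ : Type u} : LExp Λ → Prop
    | ofK {e : LExp Λ} : InK e → PosOfK e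
    | top : PosOfK .top
    | bot : PosOfK .bot
    | inter {a b} : PosOfK a → PosOfK b → PosOfK (.inter a b)
    | union {a b} : PosOfK a → PosOfK b → PosOfK (.union a b)
    | rinv (l) {a} : PosOfK a → PosOfK (.rinv l a)
    | rbox (l) {a} : PosOfK a → PosOfK (.rbox l a)
end

/-- Quasi-safe `L`-expressions: positive combinations of safe expressions, i.e. built from
safe expressions using only `∩`, `∪`, `R_λ^{-1}`, `R_λ^□`, `⊤`, `⊥`. -/
inductive QuasiSafe {Λ : Type u} : LExp Λ → Prop
  | safe {e : LExp Λ} : Safe e → QuasiSafe e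
  | top : QuasiSafe .top
  | bot : QuasiSafe .bot
  | inter {a b} : QuasiSafe a → QuasiSafe b → QuasiSafe (.inter a b)
  | union {a b} : QuasiSafe a → QuasiSafe b → QuasiSafe (.union a b)
  | rinv (l) {a} : QuasiSafe a → QuasiSafe (.rinv l a)
  | rbox (l) {a} : QuasiSafe a → QuasiSafe (.rbox l a)

/-- `ReplOne i ψ φ φ'`: `φ'` is the result of replacing one occurrence of the variable
`x_i` in `φ` by `ψ`. -/
inductive ReplOne {Λ : Type u} (i : ℕ) (ψ : LExp Λ) : LExp Λ → LExp Λ → Prop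
  | here : ReplOne i ψ (.var i) ψ
  | interL {a a' b} : ReplOne i ψ a a' → ReplOne i ψ (.inter a b) (.inter a' b)
  | interR {a b b'} : ReplOne i ψ b b' → ReplOne i ψ (.inter a b) (.inter a b')
  | unionL {a a' b} : ReplOne i ψ a a' → ReplOne i ψ (.union a b) (.union a' b)
  | unionR {a b b'} : ReplOne i ψ b b' → ReplOne i ψ (.union a b) (.union a b')
  | rinv (l) {a a'} : ReplOne i ψ a a' → ReplOne i ψ (.rinv l a) (.rinv l a')
  | rbox (l) {a a'} : ReplOne i ψ a a' → ReplOne i ψ (.rbox l a) (.rbox l a')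
  | rfw (l) {a a'} : ReplOne i ψ a a' → ReplOne i ψ (.rfw l a) (.rfw l a')

/-- A finite union of `L`-expressions (empty union is `⊥`). -/
def unionList {Λ : Type u} : List (LExp Λ) → LExp Λ
  | [] => .bot
  | e :: es => .union e (unionList es)

/-- `UnionOfSafe e`: `e` is a finite union of safe expressions. -/
inductive UnionOfSafe {Λ : Type u} : LExp Λ → Prop
  | bot : UnionOfSafe .bot
  | safe {e : LExp Λ} : Safe e → UnionOfSafe e
  | union {a b} : UnionOfSafe a → UnionOfSafe b → UnionOfSafe (.union a b)

/-- Syntactic `KP^{POS}`: the `L`-expression obtained from the positive formula `POS` by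
replacing each set variable `P^l_i` by the `L`-expression `KF (l, i)`.
(Junk value on non-positive constructors.) -/
def KPsub {Λ : Type u} (KF : ℕ × ℕ → LExp Λ) : MF Λ (ℕ × ℕ) → LExp Λ
  | .var q => KF q
  | .top => .top
  | .bot => .bot
  | .and a b => .inter (KPsub KF a) (KPsub KF b)
  | .or a b => .union (KPsub KF a) (KPsub KF b)
  | .dia l a => .rinv l (KPsub KF a)
  | .box l a => .rbox l (KPsub KF a)
  | .neg _ => .bot
  | .imp _ _ => .bot

/-- Syntactic `KVF^φ(t)`: the `L`-expression obtained from `KV^φ` by substituting the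
`L`-expression `t` for `#` and `KF (l, i)` for each set variable `P^l_i`.
(Junk value on constructors that do not occur in regular box-formulas.) -/
def KVFsyn {Λ : Type u} (KF : ℕ × ℕ → LExp Λ) : MF Λ (ℕ × ℕ) → LExp Λ → LExp Λ
  | .var _, t => t
  | .imp POS ψ, t => KVFsyn KF ψ (.inter t (KPsub KF POS))
  | .box l ψ, t => KVFsyn KF ψ (.rfw l t)
  | _, _ => .bot

open scoped Classical in
/-- The syntactic minimal valuation `KF_f^{p^k_i}` for variables `x_0, …, x_{n-1}` and
`f` assigning to each variable a finite set of regular box-formulas: defined by recursion on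
the rank `k` as the union, over all `j < n` and all `φ ∈ f j` with head `p^k_i`, of
`KVF_f^φ(x_j)`, which is `KV^φ` with `x_j` substituted for `#` and `KF_f^{p^l_m}`
substituted for each `P^l_m` with `l < k`. -/
noncomputable def KFsyn {Λ : Type u} (n : ℕ) (f : ℕ → Finset (MF Λ (ℕ × ℕ))) :
    ℕ → ℕ → LExp Λ :=
  fun k => Nat.strongRecOn (motive := fun _ => ℕ → LExp Λ) k fun k ih i =>
    unionList (((List.range n).flatMap fun j =>
      ((f j).toList.filter fun φ => decide (RegBF Prod.fst φ (k, i))).map fun φ =>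
        KVFsyn (fun q => if h : q.1 < k then ih q.1 h q.2 else LExp.bot) φ (LExp.var j)))

/-- The expressions substituted for the set variables `P^l_m`, `l < k`, in `KVF`:
the syntactic minimal valuations of the lower ranks. -/
noncomputable def lowKF {Λ : Type u} (n : ℕ) (f : ℕ → Finset (MF Λ (ℕ × ℕ))) (k : ℕ) :
    ℕ × ℕ → LExp Λ :=
  fun q => if q.1 < k then KFsyn n f q.1 q.2 else LExp.bot

/-- `KVFat n f φ j k` is the `L`-expression `KVF_f^φ(x_j)` for `φ` a regular box-formula
of rank `k`. -/
noncomputable def KVFat {Λ : Type u} (n : ℕ) (f : ℕ → Finset (MF Λ (ℕ × ℕ)))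
    (φ : MF Λ (ℕ × ℕ)) (j k : ℕ) : LExp Λ :=
  KVFsyn (lowKF n f k) φ (.var j)

/-- A labelled tree-like structure: a set of vertices with relations indexed by `Λ`,
a root, and a label function assigning to every vertex a set of labels from `α`. -/
structure LabTree (Λ : Type u) (α : Type v) where
  V : Type
  R : Λ → V → V → Prop
  root : V
  label : V → Set α

/-- Derivation trees witnessing that a formula is built from base formulas using only
`∧` and `◇_λ`. -/
inductive BuiltT (Λ : Type u) (V : Type v) : Type (max u v)
  | base : MF Λ V → BuiltT Λ V
  | and : BuiltT Λ V → BuiltT Λ V → BuiltT Λ V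
  | dia : Λ → BuiltT Λ V → BuiltT Λ V

/-- The modal formula described by a derivation tree. -/
def BuiltT.formula {Λ : Type u} {V : Type v} : BuiltT Λ V → MF Λ V
  | base φ => φ
  | and a b => .and a.formula b.formula
  | dia l a => .dia l a.formula

/-- The derivation tree uses only base formulas from `A`. -/
def BuiltT.Ok {Λ : Type u} {V : Type v} (A : Set (MF Λ V)) : BuiltT Λ V → Prop
  | base φ => φ ∈ A
  | and a b => a.Ok A ∧ b.Ok A
  | dia _ a => a.Ok A

/-- Helper for gluing two labelled trees at their roots: the relation on the disjoint sum,
with the edges out of the second root re-attached to the first root. -/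
def glueR {Λ : Type u} {W₁ W₂ : Type} (R₁ : Λ → W₁ → W₁ → Prop) (R₂ : Λ → W₂ → W₂ → Prop)
    (r₁ : W₁) (r₂ : W₂) (l : Λ) : W₁ ⊕ W₂ → W₁ ⊕ W₂ → Prop
  | Sum.inl a, Sum.inl b => R₁ l a b
  | Sum.inr a, Sum.inr b => R₂ l a b
  | Sum.inl a, Sum.inr b => a = r₁ ∧ R₂ l r₂ b
  | Sum.inr _, Sum.inl _ => False

open Classical in
/-- Helper for gluing two labelled trees at their roots: the label function, the glued root
receiving the union of the two root labels. -/
noncomputable def glueLab {α : Type w} {W₁ W₂ : Type} (L₁ : W₁ → Set α) (L₂ : W₂ → Set α)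
    (r₁ : W₁) (r₂ : W₂) : W₁ ⊕ W₂ → Set α
  | Sum.inl a => if a = r₁ then L₁ r₁ ∪ L₂ r₂ else L₁ a
  | Sum.inr b => L₂ b

/-- Helper for prefixing a labelled tree with a new root: the relation on `Option W`,
with an `R_{l₀}`-edge from the new root `none` to the old root `r`. -/
def prefR {Λ : Type u} {W : Type} (R : Λ → W → W → Prop) (l₀ : Λ) (r : W) (l : Λ) :
    Option W → Option W → Prop
  | none, some w => l = l₀ ∧ w = r
  | some a, some b => R l a b
  | _, _ => False

/-- Helper for prefixing a labelled tree with a new root: the label function, the new root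
getting the empty label. -/
def prefLab {α : Type w} {W : Type} (L : W → Set α) : Option W → Set α
  | none => ∅
  | some a => L a

/-- The reduced syntactical tree of a formula built from base formulas using `∧` and `◇_λ`:
a single root labelled `{a}` for a base formula `a`; for a conjunction, the two trees
with their roots identified (labels united); for `◇_λ ψ`, a new root with empty label and an
`R_λ`-edge to the root of the tree of `ψ`. -/
noncomputable def TreeOf {Λ : Type u} {V : Type v} : BuiltT Λ V → LabTree Λ (MF Λ V)
  | .base φ =>
      { V := Unit, R := fun _ _ _ => False, root := (), label := fun _ => {φ} }
  | .and b₁ b₂ =>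
      let T₁ := TreeOf b₁
      let T₂ := TreeOf b₂
      { V := {v : T₁.V ⊕ T₂.V // v ≠ Sum.inr T₂.root},
        R := fun l u v => glueR T₁.R T₂.R T₁.root T₂.root l u.1 v.1,
        root := ⟨Sum.inl T₁.root, by exact Sum.inl_ne_inr⟩,
        label := fun v => glueLab T₁.label T₂.label T₁.root T₂.root v.1 }
  | .dia l b =>
      let T := TreeOf b
      { V := Option T.V,
        R := fun l' u v => prefR T.R l T.root l' u v,
        root := none,
        label := fun v => prefLab T.label v }

/-- Restrictedly positive first-order formulas over the frame language: built from atoms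
`y ∈ E` (`E` an `L`-expression) using `∧`, `∨` and the restricted quantifiers
`(∀ y ◁_λ x)` and `(∃ y ◁_λ x)`. -/
inductive KrF (Λ : Type u) : Type u
  | atom : ℕ → LExp Λ → KrF Λ
  | and : KrF Λ → KrF Λ → KrF Λ
  | or : KrF Λ → KrF Λ → KrF Λ
  | all : ℕ → Λ → ℕ → KrF Λ → KrF Λ
  | ex : ℕ → Λ → ℕ → KrF Λ → KrF Λ

namespace KrF
variable {Λ : Type u}

/-- Truth of a restrictedly positive formula in a frame under an assignment `g` of points to
individual variables; the atom `y ∈ E` is read via the `#`-translation, i.e. as membership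
of `g y` in the denotation of `E`. -/
def holds (F : Frame Λ) : (ℕ → F.W) → KrF Λ → Prop
  | g, atom y E => g y ∈ E.den F g
  | g, and a b => holds F g a ∧ holds F g b
  | g, or a b => holds F g a ∨ holds F g b
  | g, all y l x β => ∀ w, F.R l (g x) w → holds F (Function.update g y w) β
  | g, ex y l x β => ∃ w, F.R l (g x) w ∧ holds F (Function.update g y w) β

/-- Free variables. -/
def fv : KrF Λ → Set ℕ
  | atom y E => insert y E.evars
  | and a b => fv a ∪ fv b
  | or a b => fv a ∪ fv b
  | all y _ x β => insert x (fv β \ {y})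
  | ex y _ x β => insert x (fv β \ {y})

/-- Bound variables. -/
def bv : KrF Λ → Set ℕ
  | atom _ _ => ∅
  | and a b => bv a ∪ bv b
  | or a b => bv a ∪ bv b
  | all y _ _ β => insert y (bv β)
  | ex y _ _ β => insert y (bv β)

/-- No two distinct quantifier occurrences bind the same variable. -/
def CleanBound : KrF Λ → Prop
  | atom _ _ => True
  | and a b => CleanBound a ∧ CleanBound b ∧ bv a ∩ bv b = ∅
  | or a b => CleanBound a ∧ CleanBound b ∧ bv a ∩ bv b = ∅
  | all y _ _ β => CleanBound β ∧ y ∉ bv β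
  | ex y _ _ β => CleanBound β ∧ y ∉ bv β

/-- Clean formulas: no variable occurs both free and bound, and no two distinct quantifier
occurrences bind the same variable. -/
def Clean (φ : KrF Λ) : Prop := fv φ ∩ bv φ = ∅ ∧ CleanBound φ

/-- All the `L`-expressions occurring in atoms of the formula satisfy `P`. -/
def AtomsAll (P : LExp Λ → Prop) : KrF Λ → Prop
  | atom _ E => P E
  | and a b => AtomsAll P a ∧ AtomsAll P b
  | or a b => AtomsAll P a ∧ AtomsAll P b
  | all _ _ _ β => AtomsAll P β
  | ex _ _ _ β => AtomsAll P β

/-- Quantifier-free formulas (built from atoms using only `∧` and `∨`). -/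
def QFree : KrF Λ → Prop
  | atom _ _ => True
  | and a b => QFree a ∧ QFree b
  | or a b => QFree a ∧ QFree b
  | all _ _ _ _ => False
  | ex _ _ _ _ => False

/-- Formulas built from atoms using only `∧`, `∨` and restricted universal quantification
(no existential quantifier). -/
def NoEx : KrF Λ → Prop
  | atom _ _ => True
  | and a b => NoEx a ∧ NoEx b
  | or a b => NoEx a ∧ NoEx b
  | all _ _ _ β => NoEx β
  | ex _ _ _ _ => False

/-- `GKok U e φ`: every variable occurring in an `L`-expression of an atom of `φ` is
inherently universal. Here `U` is the set of variables that are inherently universal so far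
(initially the free variables) and `e` records whether we are within the scope of an
existential quantifier. -/
def GKok : Set ℕ → Bool → KrF Λ → Prop
  | U, _, atom _ E => E.evars ⊆ U
  | U, e, and a b => GKok U e a ∧ GKok U e b
  | U, e, or a b => GKok U e a ∧ GKok U e b
  | U, false, all y _ _ β => GKok (insert y U) false β
  | U, true, all _ _ _ β => GKok U true β
  | U, _, ex _ _ _ β => GKok U true β

end KrF

/-- A generalized Kracht formula with free variables: clean, restrictedly positive with safe
atoms, and in every atom `y ∈ E` all variables of `E` are inherently universal. -/
def IsGenKrachtFV {Λ : Type u} (α : KrF Λ) : Prop :=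
  α.Clean ∧ α.AtomsAll Safe ∧ α.GKok α.fv false

/-- A generalized Kracht formula: a generalized Kracht formula with free variables whose
only free variable is `x0`. -/
def IsGenKracht {Λ : Type u} (α : KrF Λ) (x0 : ℕ) : Prop :=
  IsGenKrachtFV α ∧ α.fv = {x0}

/-- Generalized Sahlqvist antecedents: built from regular box-formulas and negative
formulas using only `∧`, `∨`, `◇_λ`. -/
inductive GSAnt {Λ : Type u} : MF Λ (ℕ × ℕ) → Prop
  | reg {φ p} : RegBF Prod.fst φ p → GSAnt φ
  | neg {φ} : Positive φ → GSAnt (.neg φ)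
  | and {a b} : GSAnt a → GSAnt b → GSAnt (.and a b)
  | or {a b} : GSAnt a → GSAnt b → GSAnt (.or a b)
  | dia (l) {a} : GSAnt a → GSAnt (.dia l a)

/-- Generalized Sahlqvist formulas: built from generalized Sahlqvist implications
`GSA → ⊥` by applying boxes and conjunctions, and disjunctions only to formulas without
common propositional variables. -/
inductive GSF {Λ : Type u} : MF Λ (ℕ × ℕ) → Prop
  | impl {a} : GSAnt a → GSF (.imp a .bot)
  | box (l) {a} : GSF a → GSF (.box l a)
  | and {a b} : GSF a → GSF b → GSF (.and a b)
  | or {a b} : GSF a → GSF b → MF.vars a ∩ MF.vars b = ∅ → GSF (.or a b)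

open Classical in
/-- The modal translation `E^T` of a quasi-safe expression: safe subexpressions are
replaced by their associated propositional variables `p_E`, and `∩, ∪, R^{-1}_λ, R^□_λ`
become `∧, ∨, ◇_λ, □_λ`. -/
noncomputable def Etrans {Λ : Type u} (pE : LExp Λ → ℕ × ℕ) : LExp Λ → MF Λ (ℕ × ℕ)
  | .var i => .var (pE (.var i))
  | .top => .top
  | .bot => .bot
  | .inter a b =>
      if Safe (LExp.inter a b) then .var (pE (.inter a b))
      else .and (Etrans pE a) (Etrans pE b)
  | .union a b =>
      if Safe (LExp.union a b) then .var (pE (.union a b))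
      else .or (Etrans pE a) (Etrans pE b)
  | .rinv l a =>
      if Safe (LExp.rinv l a) then .var (pE (.rinv l a)) else .dia l (Etrans pE a)
  | .rbox l a =>
      if Safe (LExp.rbox l a) then .var (pE (.rbox l a)) else .box l (Etrans pE a)
  | .rfw l a => if Safe (LExp.rfw l a) then .var (pE (.rfw l a)) else .bot

/-- A finite disjunction of modal formulas (empty disjunction is `⊥`). -/
def orList {Λ : Type u} {V : Type v} : List (MF Λ V) → MF Λ V
  | [] => .bot
  | a :: as => .or a (orList as)

namespace St17

variable {Λ : Type u} {V : Type v}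

theorem subexp_trans {a b c : LExp Λ} (h1 : Subexp a b) (h2 : Subexp b c) : Subexp a c := by
  induction h2 with
  | refl => exact h1
  | interL _ ih => exact .interL (ih h1)
  | interR _ ih => exact .interR (ih h1)
  | unionL _ ih => exact .unionL (ih h1)
  | unionR _ ih => exact .unionR (ih h1)
  | rinv l _ ih => exact .rinv l (ih h1)
  | rbox l _ ih => exact .rbox l (ih h1)
  | rfw l _ ih => exact .rfw l (ih h1)

theorem den_unionList {F : Frame Λ} {g : ℕ → F.W} (L : List (LExp Λ)) (w : F.W) :
    w ∈ (unionList L).den F g ↔ ∃ e ∈ L, w ∈ e.den F g := by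
  induction L with
  | nil => simp [unionList, LExp.den]
  | cons a as ih => simp [unionList, LExp.den, ih]

theorem sat_orList {F : Frame Λ} {θ : V → Set F.W} (L : List (MF Λ V)) (w : F.W) :
    sat F θ w (orList L) ↔ ∃ a ∈ L, sat F θ w a := by
  induction L with
  | nil => simp [orList, sat]
  | cons a as ih => simp [orList, sat, ih]

theorem den_KPsub_subset {F : Frame Λ} {g : ℕ → F.W} {θ : ℕ × ℕ → Set F.W}
    {KF : ℕ × ℕ → LExp Λ} (hKF : ∀ q, (KF q).den F g ⊆ θ q) :
    ∀ {POS : MF Λ (ℕ × ℕ)}, Positive POS →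
      ∀ w, w ∈ (KPsub KF POS).den F g → sat F θ w POS := by
  intro POS h
  induction h with
  | var p => intro w hw; exact hKF p hw
  | top => intro w _; trivial
  | bot => intro w hw; exact hw.elim
  | and ha hb iha ihb => intro w hw; exact ⟨iha w hw.1, ihb w hw.2⟩
  | or ha hb iha ihb =>
      intro w hw
      rcases hw with hw | hw
      · exact Or.inl (iha w hw)
      · exact Or.inr (ihb w hw)
  | dia l ha ih =>
      rintro w ⟨v, hv, hm⟩
      exact ⟨v, hv, ih v hm⟩
  | box l ha ih =>
      intro w hw v hv
      exact ih v (hw v hv)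

theorem sat_mem_KPsub {F : Frame Λ} {g : ℕ → F.W} {θ : ℕ × ℕ → Set F.W}
    {KF : ℕ × ℕ → LExp Λ} :
    ∀ {POS : MF Λ (ℕ × ℕ)}, Positive POS →
      (∀ q ∈ MF.vars POS, θ q ⊆ (KF q).den F g) →
      ∀ w, sat F θ w POS → w ∈ (KPsub KF POS).den F g := by
  intro POS h
  induction h with
  | var p => intro hKF w hw; exact hKF p rfl hw
  | top => intro _ w _; trivial
  | bot => intro _ w hw; exact hw.elim
  | and ha hb iha ihb =>
      intro hKF w hw
      exact ⟨iha (fun q hq => hKF q (Or.inl hq)) w hw.1,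
             ihb (fun q hq => hKF q (Or.inr hq)) w hw.2⟩
  | or ha hb iha ihb =>
      intro hKF w hw
      rcases hw with hw | hw
      · exact Or.inl (iha (fun q hq => hKF q (Or.inl hq)) w hw)
      · exact Or.inr (ihb (fun q hq => hKF q (Or.inr hq)) w hw)
  | dia l ha ih =>
      rintro hKF w ⟨v, hv, hm⟩
      exact ⟨v, hv, ih hKF v hm⟩
  | box l ha ih =>
      intro hKF w hw v hv
      exact ih hKF v (hw v hv)

theorem den_KVFsyn_subset {F : Frame Λ} {g : ℕ → F.W} {θ : ℕ × ℕ → Set F.W}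
    {KF : ℕ × ℕ → LExp Λ} {r : ℕ × ℕ → ℕ} (hKF : ∀ q, (KF q).den F g ⊆ θ q) :
    ∀ {φ : MF Λ (ℕ × ℕ)} {p : ℕ × ℕ}, RegBF r φ p →
      ∀ t : LExp Λ, (∀ w ∈ t.den F g, sat F θ w φ) →
        (KVFsyn KF φ t).den F g ⊆ θ p := by
  intro φ p h
  induction h with
  | var p => intro t ht w hw; exact ht w hw
  | imp hPOS hrank hψ ih =>
      intro t ht
      simp only [KVFsyn]
      apply ih
      intro w hw
      exact ht w hw.1 (den_KPsub_subset hKF hPOS w hw.2)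
  | box l hψ ih =>
      intro t ht
      simp only [KVFsyn]
      apply ih
      rintro w ⟨v, hv, hvt⟩
      exact ht v hvt w hv

theorem sat_of_KVFsyn {F : Frame Λ} {g : ℕ → F.W} {θ : ℕ × ℕ → Set F.W}
    {KF : ℕ × ℕ → LExp Λ} {r : ℕ × ℕ → ℕ} :
    ∀ {φ : MF Λ (ℕ × ℕ)} {p : ℕ × ℕ}, RegBF r φ p →
      (∀ q, r q < r p → θ q ⊆ (KF q).den F g) →
      ∀ t : LExp Λ, (KVFsyn KF φ t).den F g ⊆ θ p →
        ∀ w ∈ t.den F g, sat F θ w φ := by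
  intro φ p h
  induction h with
  | var p => intro hKF t hsub w hw; exact hsub hw
  | @imp POS ψ p hPOS hrank hψ ih =>
      intro hKF t hsub w hw hPOSw
      refine ih hKF (.inter t (KPsub KF POS)) ?_ w
        (Set.mem_inter hw (sat_mem_KPsub hPOS (fun q hq => hKF q (hrank q hq)) w hPOSw))
      simpa only [KVFsyn] using hsub
  | box l hψ ih =>
      intro hKF t hsub w hw v hv
      refine ih hKF (.rfw l t) ?_ v ⟨w, hv, hw⟩
      simpa only [KVFsyn] using hsub

open scoped Classical in
theorem KFsyn_eq (n : ℕ) (f : ℕ → Finset (MF Λ (ℕ × ℕ))) (k i : ℕ) :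
    KFsyn n f k i = unionList (((List.range n).flatMap fun j =>
      ((f j).toList.filter fun φ => decide (RegBF Prod.fst φ (k, i))).map fun φ =>
        KVFsyn (fun q => if h : q.1 < k then KFsyn n f q.1 q.2 else LExp.bot) φ
          (LExp.var j))) := by
  show Nat.strongRecOn (motive := fun _ => ℕ → LExp Λ) k _ i = _
  rw [Nat.strongRecOn_eq]
  rfl

theorem Etrans_safe {pE : LExp Λ → ℕ × ℕ} {e : LExp Λ} (h : Safe e) :
    Etrans pE e = .var (pE e) := by
  cases e with
  | var i => rfl
  | top => cases h.1
  | bot => cases h.1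
  | inter a b => simp only [Etrans, if_pos h]
  | union a b => cases h.1
  | rinv l a => cases h.1
  | rbox l a => cases h.1
  | rfw l a => simp only [Etrans, if_pos h]

theorem Etrans_positive (pE : LExp Λ → ℕ × ℕ) :
    ∀ e : LExp Λ, Positive (Etrans pE e) := by
  intro e
  induction e with
  | var i => exact .var _
  | top => exact .top
  | bot => exact .bot
  | inter a b iha ihb =>
      simp only [Etrans]; split
      · exact .var _
      · exact .and iha ihb
  | union a b iha ihb =>
      simp only [Etrans]; split
      · exact .var _
      · exact .or iha ihb
  | rinv l a ih =>
      simp only [Etrans]; split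
      · exact .var _
      · exact .dia l ih
  | rbox l a ih =>
      simp only [Etrans]; split
      · exact .var _
      · exact .box l ih
  | rfw l a ih =>
      simp only [Etrans]; split
      · exact .var _
      · exact .bot

theorem sat_mono {F : Frame Λ} {θ₁ θ₂ : V → Set F.W} (hθ : ∀ q, θ₁ q ⊆ θ₂ q) :
    ∀ {φ : MF Λ V}, Positive φ → ∀ w, sat F θ₁ w φ → sat F θ₂ w φ := by
  intro φ h
  induction h with
  | var p => intro w hw; exact hθ p hw
  | top => intro w _; trivial
  | bot => intro w hw; exact hw
  | and _ _ iha ihb => intro w hw; exact ⟨iha w hw.1, ihb w hw.2⟩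
  | or _ _ iha ihb =>
      intro w hw
      rcases hw with hw | hw
      · exact Or.inl (iha w hw)
      · exact Or.inr (ihb w hw)
  | dia l _ ih => rintro w ⟨v, hv, hm⟩; exact ⟨v, hv, ih v hm⟩
  | box l _ ih => intro w hw v hv; exact ih v (hw v hv)

end St17

namespace St17
section Transfer

variable {Λ : Type u}

open scoped Classical

noncomputable def witInv (F : Frame Λ) (g : ℕ → F.W) (l : Λ) (a : LExp Λ) (w : F.W) : F.W :=
  if h : ∃ v, F.R l w v ∧ v ∈ a.den F g then h.choose else w

theorem witInv_spec {F : Frame Λ} {g : ℕ → F.W} {l : Λ} {a : LExp Λ} {w : F.W}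
    (h : ∃ v, F.R l w v ∧ v ∈ a.den F g) :
    F.R l w (witInv F g l a w) ∧ witInv F g l a w ∈ a.den F g := by
  rw [witInv, dif_pos h]; exact h.choose_spec

noncomputable def witBox (F : Frame Λ) (g : ℕ → F.W) (l : Λ) (a : LExp Λ) (w : F.W) : F.W :=
  if h : ∃ v, F.R l w v ∧ v ∉ a.den F g then h.choose else w

theorem witBox_spec {F : Frame Λ} {g : ℕ → F.W} {l : Λ} {a : LExp Λ} {w : F.W}
    (h : ∃ v, F.R l w v ∧ v ∉ a.den F g) :
    F.R l w (witBox F g l a w) ∧ witBox F g l a w ∉ a.den F g := by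
  rw [witBox, dif_pos h]; exact h.choose_spec

noncomputable def witFw (F : Frame Λ) (g : ℕ → F.W) (l : Λ) (a : LExp Λ) (w : F.W) : F.W :=
  if h : ∃ v, F.R l v w ∧ v ∈ a.den F g then h.choose else w

theorem witFw_spec {F : Frame Λ} {g : ℕ → F.W} {l : Λ} {a : LExp Λ} {w : F.W}
    (h : ∃ v, F.R l v w ∧ v ∈ a.den F g) :
    F.R l (witFw F g l a w) w ∧ witFw F g l a w ∈ a.den F g := by
  rw [witFw, dif_pos h]; exact h.choose_spec

noncomputable def witOps (F : Frame Λ) (g : ℕ → F.W) : LExp Λ → List (F.W → F.W)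
  | .var _ => []
  | .top => []
  | .bot => []
  | .inter a b => witOps F g a ++ witOps F g b
  | .union a b => witOps F g a ++ witOps F g b
  | .rinv l a => witInv F g l a :: witOps F g a
  | .rbox l a => witBox F g l a :: witOps F g a
  | .rfw l a => witFw F g l a :: witOps F g a

theorem witOps_sub {F : Frame Λ} {g : ℕ → F.W} {e e' : LExp Λ} (h : Subexp e' e) :
    ∀ f ∈ witOps F g e', f ∈ witOps F g e := by
  induction h with
  | refl => exact fun f hf => hf
  | interL _ ih => exact fun f hf => List.mem_append_left _ (ih f hf)
  | interR _ ih => exact fun f hf => List.mem_append_right _ (ih f hf)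
  | unionL _ ih => exact fun f hf => List.mem_append_left _ (ih f hf)
  | unionR _ ih => exact fun f hf => List.mem_append_right _ (ih f hf)
  | rinv l _ ih => exact fun f hf => List.mem_cons_of_mem _ (ih f hf)
  | rbox l _ ih => exact fun f hf => List.mem_cons_of_mem _ (ih f hf)
  | rfw l _ ih => exact fun f hf => List.mem_cons_of_mem _ (ih f hf)

theorem den_transfer (E₁ E₂ : LExp Λ)
    (h : ∀ (F : Frame.{u, u₂} Λ) (g : ℕ → F.W), E₁.den F g = E₂.den F g) :
    ∀ (F : Frame.{u, u₃} Λ) (g : ℕ → F.W), E₁.den F g = E₂.den F g := by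
  intro F g
  ext x
  classical
  let ops : List (F.W → F.W) := witOps F g E₁ ++ witOps F g E₂
  let base : ℕ → F.W := fun i => Nat.casesOn i x fun j => g j
  let H : ℕ × List ℕ → F.W := fun c => c.2.foldl (fun w t => (ops.getD t id) w) (base c.1)
  let s : Setoid (ℕ × List ℕ) := ⟨fun a b => H a = H b, ⟨fun _ => rfl, Eq.symm, Eq.trans⟩⟩
  let Q := Quotient s
  let Hb : Q → F.W := Quotient.lift H fun _ _ hab => hab
  let F₀ : Frame.{u, u₂} Λ :=
    ⟨ULift.{u₂} Q, fun l a b => F.R l (Hb a.down) (Hb b.down)⟩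
  let g₀ : ℕ → F₀.W := fun i => ULift.up (Quotient.mk s (i + 1, []))
  have hinj : ∀ a b : Q, Hb a = Hb b → a = b := by
    intro a b
    refine Quotient.inductionOn₂ a b ?_
    intro c d hcd
    exact Quotient.sound hcd
  have hg₀ : ∀ i, Hb (g₀ i).down = g i := fun i => rfl
  have hclo : ∀ (q : Q) (f : F.W → F.W), f ∈ ops → ∃ q' : Q, Hb q' = f (Hb q) := by
    intro q f hf
    refine Quotient.inductionOn q ?_
    rintro ⟨i, ts⟩
    obtain ⟨t, ht, hte⟩ := List.getElem_of_mem hf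
    refine ⟨Quotient.mk s (i, ts ++ [t]), ?_⟩
    show H (i, ts ++ [t]) = f (H (i, ts))
    show (ts ++ [t]).foldl (fun w t => (ops.getD t id) w) (base i) = _
    rw [List.foldl_append]
    show (ops.getD t id) _ = _
    rw [List.getD_eq_getElem ops id ht, hte]
  have habs : ∀ e : LExp Λ, (Subexp e E₁ ∨ Subexp e E₂) →
      ∀ q : F₀.W, q ∈ e.den F₀ g₀ ↔ Hb q.down ∈ e.den F g := by
    intro e
    induction e with
    | var i =>
        intro _ q
        constructor
        · rintro rfl; exact hg₀ i
        · intro h'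
          have hqe : q.down = (g₀ i).down := hinj _ _ (h'.trans (hg₀ i).symm)
          show q = g₀ i
          exact ULift.down_injective hqe
    | top => intro _ q; simp [LExp.den]
    | bot => intro _ q; simp [LExp.den]
    | inter a b iha ihb =>
        intro hmem q
        have ha := iha (hmem.imp (subexp_trans (.interL (.refl a)))
          (subexp_trans (.interL (.refl a)))) q
        have hb := ihb (hmem.imp (subexp_trans (.interR (.refl b)))
          (subexp_trans (.interR (.refl b)))) q
        exact and_congr ha hb
    | union a b iha ihb =>
        intro hmem q
        have ha := iha (hmem.imp (subexp_trans (.unionL (.refl a)))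
          (subexp_trans (.unionL (.refl a)))) q
        have hb := ihb (hmem.imp (subexp_trans (.unionR (.refl b)))
          (subexp_trans (.unionR (.refl b)))) q
        exact or_congr ha hb
    | rinv l a ih =>
        intro hmem q
        have hmem' : Subexp a E₁ ∨ Subexp a E₂ :=
          hmem.imp (subexp_trans (.rinv l (.refl a))) (subexp_trans (.rinv l (.refl a)))
        have hop : witInv F g l a ∈ ops := by
          rcases hmem with h1 | h1
          · exact List.mem_append_left _ (witOps_sub h1 _ List.mem_cons_self)
          · exact List.mem_append_right _ (witOps_sub h1 _ List.mem_cons_self)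
        constructor
        · rintro ⟨q', hR, hq'⟩
          exact ⟨Hb q'.down, hR, (ih hmem' q').1 hq'⟩
        · rintro ⟨v, hv, hvden⟩
          have hex : ∃ v, F.R l (Hb q.down) v ∧ v ∈ a.den F g := ⟨v, hv, hvden⟩
          obtain ⟨qd', hqd'⟩ := hclo q.down _ hop
          have hspec := witInv_spec hex
          refine ⟨ULift.up qd', ?_, ?_⟩
          · show F.R l (Hb q.down) (Hb qd')
            rw [hqd']; exact hspec.1
          · exact (ih hmem' (ULift.up qd')).2
              (show Hb qd' ∈ a.den F g by rw [hqd']; exact hspec.2)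
    | rbox l a ih =>
        intro hmem q
        have hmem' : Subexp a E₁ ∨ Subexp a E₂ :=
          hmem.imp (subexp_trans (.rbox l (.refl a))) (subexp_trans (.rbox l (.refl a)))
        have hop : witBox F g l a ∈ ops := by
          rcases hmem with h1 | h1
          · exact List.mem_append_left _ (witOps_sub h1 _ List.mem_cons_self)
          · exact List.mem_append_right _ (witOps_sub h1 _ List.mem_cons_self)
        constructor
        · intro hq v hv
          by_contra hvn
          have hex : ∃ v, F.R l (Hb q.down) v ∧ v ∉ a.den F g := ⟨v, hv, hvn⟩
          obtain ⟨qd', hqd'⟩ := hclo q.down _ hop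
          have hspec := witBox_spec hex
          have hmemq : (ULift.up qd' : F₀.W) ∈ a.den F₀ g₀ := by
            refine hq (ULift.up qd') ?_
            show F.R l (Hb q.down) (Hb qd')
            rw [hqd']; exact hspec.1
          have h2 : Hb qd' ∈ a.den F g := (ih hmem' (ULift.up qd')).1 hmemq
          rw [hqd'] at h2
          exact hspec.2 h2
        · intro hq q' hR
          exact (ih hmem' q').2 (hq (Hb q'.down) hR)
    | rfw l a ih =>
        intro hmem q
        have hmem' : Subexp a E₁ ∨ Subexp a E₂ :=
          hmem.imp (subexp_trans (.rfw l (.refl a))) (subexp_trans (.rfw l (.refl a)))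
        have hop : witFw F g l a ∈ ops := by
          rcases hmem with h1 | h1
          · exact List.mem_append_left _ (witOps_sub h1 _ List.mem_cons_self)
          · exact List.mem_append_right _ (witOps_sub h1 _ List.mem_cons_self)
        constructor
        · rintro ⟨q', hR, hq'⟩
          exact ⟨Hb q'.down, hR, (ih hmem' q').1 hq'⟩
        · rintro ⟨v, hv, hvden⟩
          have hex : ∃ v, F.R l v (Hb q.down) ∧ v ∈ a.den F g := ⟨v, hv, hvden⟩
          obtain ⟨qd', hqd'⟩ := hclo q.down _ hop
          have hspec := witFw_spec hex
          refine ⟨ULift.up qd', ?_, ?_⟩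
          · show F.R l (Hb qd') (Hb q.down)
            rw [hqd']; exact hspec.1
          · exact (ih hmem' (ULift.up qd')).2
              (show Hb qd' ∈ a.den F g by rw [hqd']; exact hspec.2)
  have hden := h F₀ g₀
  have h0 : Hb ((ULift.up (Quotient.mk s (0, [])) : F₀.W)).down = x := rfl
  constructor
  · intro hx
    have h1 : (ULift.up (Quotient.mk s (0, [])) : F₀.W) ∈ E₁.den F₀ g₀ :=
      (habs E₁ (Or.inl (.refl E₁)) _).2 (by rw [h0]; exact hx)
    rw [hden] at h1
    have := (habs E₂ (Or.inr (.refl E₂)) _).1 h1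
    rwa [h0] at this
  · intro hx
    have h1 : (ULift.up (Quotient.mk s (0, [])) : F₀.W) ∈ E₂.den F₀ g₀ :=
      (habs E₂ (Or.inr (.refl E₂)) _).2 (by rw [h0]; exact hx)
    rw [← hden] at h1
    have := (habs E₁ (Or.inl (.refl E₁)) _).1 h1
    rwa [h0] at this

end Transfer
end St17
/-- let `E` be a quasi-safe expression with variables among `x_0, …, x_{m-1}`
and suppose every safe subexpression `E'` of `E` denotes the same subset as
`KF_{f^𝔈}^{p_{E'}}` in every frame under every assignment. Then the first-order formula
`(x_l ∈ E)^#` is definable by the sequence of modal formulas `φ_0, …, φ_{m-1}` where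
`φ_i = ⋁_{φ ∈ f^𝔈(x_i)} ¬φ` for `i ≠ l` and `φ_l = (⋁_{φ ∈ f^𝔈(x_l)} ¬φ) ∨ E^T`. -/
theorem statement17 {Λ : Type u} (E : LExp Λ) (m : ℕ)
    (hE : QuasiSafe E) (hvars : E.evars ⊆ {i : ℕ | i < m})
    (f : ℕ → Finset (MF Λ (ℕ × ℕ)))
    (hfreg : ∀ j, ∀ ψ ∈ f j, ∃ p : ℕ × ℕ, RegBF Prod.fst ψ p)
    (hsupp : ∀ j, m ≤ j → f j = ∅)
    (pE : LExp Λ → ℕ × ℕ)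
    (hKF : ∀ E' : LExp Λ, Subexp E' E → Safe E' →
      ∀ (F : Frame Λ) (g : ℕ → F.W),
        E'.den F g = (KFsyn m f (pE E').1 (pE E').2).den F g)
    (l : ℕ) (hl : l < m)
    (φs : ℕ → MF Λ (ℕ × ℕ))
    (hφs : ∀ i, φs i =
      if i = l then MF.or (orList ((f i).toList.map MF.neg)) (Etrans pE E)
      else orList ((f i).toList.map MF.neg)) :
    ∀ (F : Frame Λ) (g : ℕ → F.W),
      g l ∈ E.den F g ↔
        ∀ θ : ℕ × ℕ → Set F.W, ∃ i < m, sat F θ (g i) (φs i) := by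
  intro F g
  classical
  set θmin : ℕ × ℕ → Set F.W := fun q => (KFsyn m f q.1 q.2).den F g with hθmin
  have min_le : ∀ θ : ℕ × ℕ → Set F.W, (∀ j, ∀ ψ ∈ f j, sat F θ (g j) ψ) →
      ∀ q : ℕ × ℕ, θmin q ⊆ θ q := by
    intro θ hθ
    have key : ∀ k i, (KFsyn m f k i).den F g ⊆ θ (k, i) := by
      intro k
      induction k using Nat.strongRecOn with
      | ind k ih =>
        intro i w hw
        rw [St17.KFsyn_eq, St17.den_unionList] at hw
        obtain ⟨e, he, hwe⟩ := hw
        simp only [List.mem_flatMap, List.mem_map, List.mem_filter, List.mem_range,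
          Finset.mem_toList] at he
        obtain ⟨j, hj, φ, ⟨hφf, hdec⟩, rfl⟩ := he
        have hreg : RegBF Prod.fst φ (k, i) := of_decide_eq_true hdec
        refine St17.den_KVFsyn_subset ?_ hreg (.var j) ?_ hwe
        · rintro ⟨k', i'⟩
          by_cases hq : k' < k
          · rw [dif_pos hq]; exact ih k' hq i'
          · rw [dif_neg hq]; exact fun x hx => hx.elim
        · intro w' hw'
          have hwg : w' = g j := hw'
          subst hwg
          exact hθ j φ hφf
    rintro ⟨k, i⟩
    exact key k i
  have verif : ∀ j < m, ∀ ψ ∈ f j, sat F θmin (g j) ψ := by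
    intro j hj ψ hψ
    obtain ⟨p, hp⟩ := hfreg j ψ hψ
    obtain ⟨k, i⟩ := p
    refine St17.sat_of_KVFsyn hp
      (KF := fun q => if h : q.1 < k then KFsyn m f q.1 q.2 else LExp.bot)
      ?_ (.var j) ?_ (g j) rfl
    · rintro ⟨k', i'⟩ hlt
      have hlt' : k' < k := hlt
      show θmin (k', i') ⊆ LExp.den F g (if h : k' < k then KFsyn m f k' i' else LExp.bot)
      rw [dif_pos hlt']
    · intro w hw
      show w ∈ (KFsyn m f k i).den F g
      rw [St17.KFsyn_eq, St17.den_unionList]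
      refine ⟨_, ?_, hw⟩
      simp only [List.mem_flatMap, List.mem_map, List.mem_filter, List.mem_range,
        Finset.mem_toList]
      exact ⟨j, hj, ψ, ⟨hψ, decide_eq_true hp⟩, rfl⟩
  have hKF' : ∀ E' : LExp Λ, Subexp E' E → Safe E' →
      LExp.den F g E' = LExp.den F g (KFsyn m f (pE E').1 (pE E').2) :=
    fun E' hs hsafe => St17.den_transfer _ _ (fun F' g' => hKF E' hs hsafe F' g') F g
  have safe_case : ∀ e : LExp Λ, Subexp e E → Safe e → ∀ w : F.W,
      (sat F θmin w (Etrans pE e) ↔ w ∈ e.den F g) := by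
    intro e hsub hsafe w
    rw [St17.Etrans_safe hsafe]
    show w ∈ LExp.den F g (KFsyn m f (pE e).1 (pE e).2) ↔ w ∈ LExp.den F g e
    rw [hKF' e hsub hsafe]
  have etrans_corr : ∀ e : LExp Λ, QuasiSafe e → Subexp e E → ∀ w : F.W,
      (sat F θmin w (Etrans pE e) ↔ w ∈ e.den F g) := by
    intro e hq
    induction hq with
    | @safe e hs => exact fun hsub w => safe_case e hsub hs w
    | top => intro _ w; simp [Etrans, sat, LExp.den]
    | bot => intro _ w; simp [Etrans, sat, LExp.den]
    | @inter a b ha hb iha ihb =>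
        intro hsub w
        by_cases hs : Safe (.inter a b)
        · exact safe_case _ hsub hs w
        · simp only [Etrans, if_neg hs]
          show (sat F θmin w (Etrans pE a) ∧ sat F θmin w (Etrans pE b)) ↔ _
          rw [iha (St17.subexp_trans (.interL (.refl a)) hsub) w,
            ihb (St17.subexp_trans (.interR (.refl b)) hsub) w]
          exact Iff.rfl
    | @union a b ha hb iha ihb =>
        intro hsub w
        by_cases hs : Safe (.union a b)
        · exact safe_case _ hsub hs w
        · simp only [Etrans, if_neg hs]
          show (sat F θmin w (Etrans pE a) ∨ sat F θmin w (Etrans pE b)) ↔ _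
          rw [iha (St17.subexp_trans (.unionL (.refl a)) hsub) w,
            ihb (St17.subexp_trans (.unionR (.refl b)) hsub) w]
          exact Iff.rfl
    | @rinv l a ha ih =>
        intro hsub w
        by_cases hs : Safe (.rinv l a)
        · exact safe_case _ hsub hs w
        · simp only [Etrans, if_neg hs]
          show (∃ v, F.R l w v ∧ sat F θmin v (Etrans pE a)) ↔ _
          constructor
          · rintro ⟨v, hv, h⟩
            exact ⟨v, hv, (ih (St17.subexp_trans (.rinv l (.refl a)) hsub) v).1 h⟩
          · rintro ⟨v, hv, h⟩
            exact ⟨v, hv, (ih (St17.subexp_trans (.rinv l (.refl a)) hsub) v).2 h⟩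
    | @rbox l a ha ih =>
        intro hsub w
        by_cases hs : Safe (.rbox l a)
        · exact safe_case _ hsub hs w
        · simp only [Etrans, if_neg hs]
          show (∀ v, F.R l w v → sat F θmin v (Etrans pE a)) ↔ _
          constructor
          · intro h v hv
            exact (ih (St17.subexp_trans (.rbox l (.refl a)) hsub) v).1 (h v hv)
          · intro h v hv
            exact (ih (St17.subexp_trans (.rbox l (.refl a)) hsub) v).2 (h v hv)
  constructor
  · intro hmem θ
    by_cases hall : ∀ j, ∀ ψ ∈ f j, sat F θ (g j) ψ
    · refine ⟨l, hl, ?_⟩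
      rw [hφs l, if_pos rfl]
      have h1 : sat F θmin (g l) (Etrans pE E) := (etrans_corr E hE (.refl E) (g l)).2 hmem
      exact Or.inr (St17.sat_mono (min_le θ hall) (St17.Etrans_positive pE E) (g l) h1)
    · push_neg at hall
      obtain ⟨j, ψ, hψ, hns⟩ := hall
      have hjm : j < m := by
        by_contra hc
        rw [hsupp j (le_of_not_gt hc)] at hψ
        exact absurd hψ (Finset.notMem_empty ψ)
      refine ⟨j, hjm, ?_⟩
      have hsat : sat F θ (g j) (orList ((f j).toList.map MF.neg)) := by
        rw [St17.sat_orList]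
        exact ⟨.neg ψ, List.mem_map_of_mem (Finset.mem_toList.2 hψ), hns⟩
      rw [hφs j]
      by_cases hjl : j = l
      · rw [if_pos hjl]; exact Or.inl hsat
      · rw [if_neg hjl]; exact hsat
  · intro h
    obtain ⟨i, him, hsat⟩ := h θmin
    rw [hφs i] at hsat
    have hcontra : ¬ sat F θmin (g i) (orList ((f i).toList.map MF.neg)) := by
      rw [St17.sat_orList]
      rintro ⟨a, ha, hsa⟩
      rw [List.mem_map] at ha
      obtain ⟨ψ, hψ, rfl⟩ := ha
      exact hsa (verif i him ψ (Finset.mem_toList.1 hψ))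
    by_cases hil : i = l
    · subst hil
      rw [if_pos rfl] at hsat
      rcases hsat with h1 | h2
      · exact absurd h1 hcontra
      · exact (etrans_corr E hE (.refl E) (g i)).1 h2
    · rw [if_neg hil] at hsat
      exact absurd hsat hcontra
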